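/- If an instance I satisfies formula Δ, then I ⊨ ∀I·Δ ⊨ ⊓I·Δ ⊨ Δ, where ∀ is universal literal quantification and ⊓ is the selection operator applied to all states of I. Moreover, if I does not satisfy Δ, then both ∀I·Δ and ⊓I·Δ are unsatisfiable. -/

import Mathlib

open scoped Classical

/-- Formulas over finite-domain variables: each variable `X : V` has domain `D X`.
A literal of `X` is (intended to be) a nonempty proper subset of `D X`'s states. -/
inductive Form (V : Type) (D : V → Type) : Type where
  | top : Form V D
  | bot : Form V D
  | lit : (X : V) → Set (D X) → Form V D
  | neg : Form V D → Form V D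
  | and : Form V D → Form V D → Form V D
  | or : Form V D → Form V D → Form V D

namespace Form

variable {V : Type} {D : V → Type}

/-- Satisfaction of a formula by a world. -/
def sat (w : ∀ X, D X) : Form V D → Prop
  | top => True
  | bot => False
  | lit X s => w X ∈ s
  | neg φ => ¬ sat w φ
  | and φ ψ => sat w φ ∧ sat w ψ
  | or φ ψ => sat w φ ∨ sat w ψ

/-- Conditioning `Δ|x` of a formula on state `x` of variable `X`: each `X`-literal
`ℓ` is replaced by `⊤` if `x ∈ ℓ` and by `⊥` otherwise. -/
noncomputable def cond (X : V) (x : D X) : Form V D → Form V D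
  | top => top
  | bot => bot
  | lit Y s => if h : X = Y then (if h ▸ x ∈ s then top else bot) else lit Y s
  | neg φ => neg (cond X x φ)
  | and φ ψ => and (cond X x φ) (cond X x ψ)
  | or φ ψ => or (cond X x φ) (cond X x ψ)

/-- The selection operator `⊓x·Δ := (Δ|x) ∧ Δ`. -/
noncomputable def sel (X : V) (x : D X) (Δ : Form V D) : Form V D :=
  and (cond X x Δ) Δ

/-- Logical equivalence of formulas (same models). -/
def equiv (φ ψ : Form V D) : Prop := ∀ w, sat w φ ↔ sat w ψ

/-- Variable `X` occurs (appears) in the formula. -/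
def occurs (X : V) : Form V D → Prop
  | top => False
  | bot => False
  | lit Y _ => Y = X
  | neg φ => occurs X φ
  | and φ ψ => occurs X φ ∨ occurs X ψ
  | or φ ψ => occurs X φ ∨ occurs X ψ

/-- NNF: negation-free, and every literal is a nonempty proper subset of states. -/
def isNNF : Form V D → Prop
  | top => True
  | bot => True
  | lit _ s => s.Nonempty ∧ s ≠ Set.univ
  | neg _ => False
  | and φ ψ => isNNF φ ∧ isNNF ψ
  | or φ ψ => isNNF φ ∧ isNNF ψ

/-- The `X`-literal `s` occurs in the formula. -/
def litOccurs (X : V) (s : Set (D X)) : Form V D → Prop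
  | top => False
  | bot => False
  | lit Y t => ∃ h : Y = X, h ▸ t = s
  | neg φ => litOccurs X s φ
  | and φ ψ => litOccurs X s φ ∨ litOccurs X s ψ
  | or φ ψ => litOccurs X s φ ∨ litOccurs X s ψ

/-- Every literal in the formula is implied by the instance `I`
(i.e., contains `I`'s state of its variable). -/
def litsImp (I : ∀ X, D X) : Form V D → Prop
  | top => True
  | bot => True
  | lit X s => I X ∈ s
  | neg φ => litsImp I φ
  | and φ ψ => litsImp I φ ∧ litsImp I ψ
  | or φ ψ => litsImp I φ ∧ litsImp I ψ

/-- Iterated selection `⊓` over a list of variables, using states from `v`. -/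
noncomputable def selList (v : ∀ X, D X) : List V → Form V D → Form V D
  | [], Δ => Δ
  | X :: L, Δ => sel X (v X) (selList v L Δ)

/-- The general reason `⊓I·Δ`: selection applied for all states of instance `I`. -/
noncomputable def selAll [Fintype V] (I : ∀ X, D X) (Δ : Form V D) : Form V D :=
  selList I (Finset.univ : Finset V).toList Δ

noncomputable def listAnd : List (Form V D) → Form V D
  | [] => top
  | φ :: L => and φ (listAnd L)

/-- Universal literal quantification `∀x·Δ := (Δ|x) ∧ ⋀_{y ≠ x} (x ∨ Δ|y)`. -/
noncomputable def uq (X : V) [Fintype (D X)] (x : D X) (Δ : Form V D) : Form V D :=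
  letI : DecidableEq (D X) := fun _ _ => Classical.propDecidable _
  and (cond X x Δ)
    (listAnd ((((Finset.univ : Finset (D X)).erase x).toList).map
      (fun y => or (lit X ({x} : Set (D X))) (cond X y Δ))))

/-- Iterated universal literal quantification over a list of variables. -/
noncomputable def uqList [∀ X, Fintype (D X)] (v : ∀ X, D X) : List V → Form V D → Form V D
  | [], Δ => Δ
  | X :: L, Δ => uq X (v X) (uqList v L Δ)

/-- The complete reason `∀I·Δ`. -/
noncomputable def uqAll [Fintype V] [∀ X, Fintype (D X)] (I : ∀ X, D X) (Δ : Form V D) :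
    Form V D :=
  uqList I (Finset.univ : Finset V).toList Δ

end Form

/-- A term: a conjunction of literals over distinct variables. Variable `X` is
mentioned iff `lits X ≠ univ`; each literal is nonempty (terms are consistent). -/
structure MvTerm (V : Type) (D : V → Type) : Type where
  lits : ∀ X, Set (D X)
  nonempty : ∀ X, (lits X).Nonempty

/-- A clause: a disjunction of literals over distinct variables. Variable `X` is
mentioned iff `lits X ≠ ∅`; each literal is proper (clauses are never valid). -/
structure MvClause (V : Type) (D : V → Type) : Type where
  lits : ∀ X, Set (D X)
  proper : ∀ X, lits X ≠ Set.univ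

namespace MvTerm

variable {V : Type} {D : V → Type}

def tsat (w : ∀ X, D X) (τ : MvTerm V D) : Prop := ∀ X, w X ∈ τ.lits X

def vars (τ : MvTerm V D) : Set V := {X | τ.lits X ≠ Set.univ}

/-- A simple term assigns a single state to each of its variables. -/
def simple (τ : MvTerm V D) : Prop :=
  ∀ X, τ.lits X ≠ Set.univ → ∃ x, τ.lits X = ({x} : Set (D X))

end MvTerm

namespace MvClause

variable {V : Type} {D : V → Type}

def csat (w : ∀ X, D X) (σ : MvClause V D) : Prop := ∃ X, w X ∈ σ.lits X

def vars (σ : MvClause V D) : Set V := {X | σ.lits X ≠ (∅ : Set (D X))}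

/-- A simple clause: all its literals are single states. -/
def simple (σ : MvClause V D) : Prop :=
  ∀ X, σ.lits X ≠ (∅ : Set (D X)) → ∃ x, σ.lits X = ({x} : Set (D X))

end MvClause

section PrimeDefs

variable {V : Type} {D : V → Type}

def termImp (τ τ' : MvTerm V D) : Prop := ∀ w, τ.tsat w → τ'.tsat w

def clauseImp (σ σ' : MvClause V D) : Prop := ∀ w, σ.csat w → σ'.csat w

/-- A prime implicant of the set of worlds `M`: a ⊨-maximal term implying `M`. -/
def isPrimeImplicantOf (M : (∀ X, D X) → Prop) (τ : MvTerm V D) : Prop :=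
  (∀ w, τ.tsat w → M w) ∧
  ∀ τ' : MvTerm V D, (∀ w, τ'.tsat w → M w) → termImp τ τ' → τ' = τ

/-- A prime implicate of the set of worlds `M`: a ⊨-minimal clause implied by `M`. -/
def isPrimeImplicateOf (M : (∀ X, D X) → Prop) (σ : MvClause V D) : Prop :=
  (∀ w, M w → σ.csat w) ∧
  ∀ σ' : MvClause V D, (∀ w, M w → σ'.csat w) → clauseImp σ' σ → σ' = σ

/-- Remove subsumed terms: delete any term strictly implied by another in the set. -/
def removeSubsumedT (S : Set (MvTerm V D)) : Set (MvTerm V D) :=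
  {τ ∈ S | ¬ ∃ τ' ∈ S, τ' ≠ τ ∧ termImp τ τ'}

/-- Remove subsumed clauses: delete any clause strictly implying another in the set. -/
def removeSubsumedC (S : Set (MvClause V D)) : Set (MvClause V D) :=
  {σ ∈ S | ¬ ∃ σ' ∈ S, σ' ≠ σ ∧ clauseImp σ' σ}

end PrimeDefs

namespace CGRAux

open Form

variable {V : Type} {D : V → Type}

noncomputable def upd (w : ∀ X, D X) (X : V) (x : D X) : ∀ Y, D Y :=
  fun Y => if h : X = Y then h ▸ x else w Y

lemma upd_self (w : ∀ X, D X) (X : V) : upd w X (w X) = w := by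
  funext Y
  unfold upd
  split
  · next h => subst h; rfl
  · rfl

lemma sat_cond (w : ∀ X, D X) (X : V) (x : D X) (Δ : Form V D) :
    sat w (cond X x Δ) ↔ sat (upd w X x) Δ := by
  induction Δ with
  | top => simp [Form.cond, sat]
  | bot => simp [Form.cond, sat]
  | lit Y s =>
    by_cases h : X = Y
    · subst h
      have hw : upd w X x X = x := by simp [upd]
      simp only [Form.cond, dif_pos rfl]
      by_cases hx : x ∈ s <;> simp [hx, sat, hw]
    · have hw : upd w X x Y = w Y := by simp [upd, h]
      simp [Form.cond, h, sat, hw]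
  | neg φ ih => simp [Form.cond, sat, ih]
  | and φ ψ ih1 ih2 => simp [Form.cond, sat, ih1, ih2]
  | or φ ψ ih1 ih2 => simp [Form.cond, sat, ih1, ih2]

lemma sat_listAnd (w : ∀ X, D X) (L : List (Form V D)) :
    sat w (listAnd L) ↔ ∀ φ ∈ L, sat w φ := by
  induction L with
  | nil => simp [listAnd, sat]
  | cons φ L ih => simp [listAnd, sat, ih]

lemma uq_imp_sel [∀ X, Fintype (D X)] (X : V) (x : D X) (Δ : Form V D) (w : ∀ X, D X)
    (h : sat w (uq X x Δ)) : sat w (sel X x Δ) := by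
  unfold uq at h
  obtain ⟨h1, h2⟩ := h
  refine ⟨h1, ?_⟩
  by_cases hx : w X = x
  · have := (sat_cond w X x Δ).1 h1
    rw [← hx, upd_self] at this
    exact this
  · rw [sat_listAnd] at h2
    have hmem : w X ∈ ((Finset.univ.erase x).toList) := by
      simp [Finset.mem_toList, hx]
    have h3 := h2 _ (List.mem_map_of_mem hmem)
    rcases h3 with h3 | h3
    · exact absurd h3 hx
    · have := (sat_cond w X (w X) Δ).1 h3
      rwa [upd_self] at this

lemma sel_mono {Δ Δ' : Form V D} (h : ∀ w, sat w Δ → sat w Δ') (X : V) (x : D X)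
    (w : ∀ X, D X) : sat w (sel X x Δ) → sat w (sel X x Δ') := by
  rintro ⟨h1, h2⟩
  exact ⟨(sat_cond w X x Δ').2 (h _ ((sat_cond w X x Δ).1 h1)), h w h2⟩

lemma uqList_imp_selList [∀ X, Fintype (D X)] (I : ∀ X, D X) (L : List V) (Δ : Form V D) :
    ∀ w, sat w (uqList I L Δ) → sat w (selList I L Δ) := by
  induction L with
  | nil => intro w h; exact h
  | cons X L ih =>
    intro w h
    exact sel_mono ih X (I X) w (uq_imp_sel X (I X) (uqList I L Δ) w h)

lemma selList_imp (I : ∀ X, D X) (L : List V) (Δ : Form V D) :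
    ∀ w, sat w (selList I L Δ) → sat w Δ := by
  induction L with
  | nil => intro w h; exact h
  | cons X L ih => intro w h; exact ih w h.2

lemma sat_uqList [∀ X, Fintype (D X)] (I : ∀ X, D X) (Δ : Form V D) (hI : sat I Δ)
    (L : List V) : sat I (uqList I L Δ) := by
  induction L with
  | nil => exact hI
  | cons X L ih =>
    unfold uqList uq
    refine ⟨(sat_cond I X (I X) _).2 (by rwa [upd_self]), ?_⟩
    rw [sat_listAnd]
    intro φ hφ
    simp only [List.mem_map] at hφ
    obtain ⟨y, _, rfl⟩ := hφ
    left
    show I X ∈ ({I X} : Set (D X))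
    simp

noncomputable def ovr (w I : ∀ X, D X) (L : List V) : ∀ Y, D Y :=
  fun Y => if Y ∈ L then I Y else w Y

lemma ovr_upd (w I : ∀ X, D X) (X : V) (L : List V) :
    ovr (upd w X (I X)) I L = ovr w I (X :: L) := by
  funext Y
  unfold ovr upd
  by_cases hL : Y ∈ L
  · simp [hL]
  · by_cases hXY : X = Y
    · subst hXY; simp [hL]
    · simp [hL, hXY, Ne.symm hXY]

lemma selList_sat_ovr (I : ∀ X, D X) (L : List V) (Δ : Form V D) :
    ∀ w, sat w (selList I L Δ) → sat (ovr w I L) Δ := by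
  induction L with
  | nil =>
    intro w h
    have : ovr w I [] = w := by funext Y; simp [ovr]
    rwa [this]
  | cons X L ih =>
    intro w h
    have h1 := (sat_cond w X (I X) (selList I L Δ)).1 h.1
    have := ih _ h1
    rwa [ovr_upd] at this

end CGRAux

/-- if instance `I` satisfies `Δ` then
`I ⊨ ∀I·Δ ⊨ ⊓I·Δ ⊨ Δ`; and if `I` does not satisfy `Δ`, then both `∀I·Δ` and
`⊓I·Δ` are unsatisfiable. -/
theorem complete_general_reason_chain {V : Type} {D : V → Type}
    [Fintype V] [∀ X, Fintype (D X)] (Δ : Form V D) (I : ∀ X, D X) :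
    (Form.sat I Δ →
      Form.sat I (Form.uqAll I Δ) ∧
      (∀ w, Form.sat w (Form.uqAll I Δ) → Form.sat w (Form.selAll I Δ)) ∧
      (∀ w, Form.sat w (Form.selAll I Δ) → Form.sat w Δ)) ∧
    (¬ Form.sat I Δ →
      (∀ w, ¬ Form.sat w (Form.uqAll I Δ)) ∧ (∀ w, ¬ Form.sat w (Form.selAll I Δ))) := by

  constructor
  · intro hI
    refine ⟨CGRAux.sat_uqList I Δ hI _, ?_, ?_⟩
    · exact CGRAux.uqList_imp_selList I _ Δ
    · exact CGRAux.selList_imp I _ Δ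
  · intro hI
    have hsel : ∀ w, ¬ Form.sat w (Form.selAll I Δ) := by
      intro w hw
      have h1 := CGRAux.selList_sat_ovr I (Finset.univ : Finset V).toList Δ w hw
      have h2 : CGRAux.ovr w I (Finset.univ : Finset V).toList = I := by
        funext Y
        simp [CGRAux.ovr, Finset.mem_toList]
      rw [h2] at h1
      exact hI h1
    exact ⟨fun w hw => hsel w (CGRAux.uqList_imp_selList I _ Δ w hw), hsel⟩
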